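/- There exist functions φ₁, φ₂ : GL₂(K) → ℂ, each invariant under scalar multiplication by Kˣ (φᵢ(λg) = φᵢ(g) for all λ ∈ Kˣ), such that p_*h̃ − p_*f̃ = φ₁ + φ₂, where φ₁ is invariant under right translation by the diagonal torus over R (φ₁(g·diag(a,d)) = φ₁(g) for all a, d ∈ Rˣ and g ∈ GL₂(K)), and φ₂ is an eigenfunction under left translation by the diagonal torus over R with quadratic eigencharacter (φ₂(diag(a,d)·g) = χ(ā)·χ(d̄)·φ₂(g) for all a, d ∈ Rˣ and g ∈ GL₂(K)). -/

import Mathlib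

open IsLocalRing

noncomputable section

variable (R : Type*) [CommRing R] [IsDomain R] [IsDiscreteValuationRing R]
  [Fintype (ResidueField R)] [DecidableEq (ResidueField R)]

/-- The condition defining the set `𝕄` of `2×2` matrices over `R` whose determinant has
valuation exactly `1`. -/
def inMM (M : Matrix (Fin 2) (Fin 2) R) : Prop :=
  M.det ∈ maximalIdeal R ∧ M.det ∉ (maximalIdeal R) ^ 2

/-- The function `h̃` on `Mat₂(R)`, supported on `𝕄`: for `M ∈ 𝕄`,
`h̃(M) = (1/2)·∏ᵢⱼ(1+χ(M̄ᵢⱼ))` if all four entries of `M` are units, and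
`h̃(M) = ∏ᵢⱼ(1+χ(M̄ᵢⱼ))` otherwise. -/
def htildeR (M : Matrix (Fin 2) (Fin 2) R) : ℂ := by
  classical
  exact
    if inMM R M then
      if ∀ i j, IsUnit (M i j) then
        (2 : ℂ)⁻¹ * ∏ i : Fin 2, ∏ j : Fin 2,
          ((1 + quadraticChar (ResidueField R) (residue R (M i j)) : ℤ) : ℂ)
      else
        ∏ i : Fin 2, ∏ j : Fin 2,
          ((1 + quadraticChar (ResidueField R) (residue R (M i j)) : ℤ) : ℂ)
    else 0

/-- The function `f̃` on `Mat₂(R)`, supported on `𝕄`: for `M ∈ 𝕄`,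
`f̃(M) = χ(M̄₁₁·M̄₁₂)` if `M₁₁, M₁₂` are units, `f̃(M) = χ(M̄₂₁·M̄₂₂)` if `M₂₁, M₂₂` are
units, and `f̃(M) = 0` otherwise. -/
def ftildeR (M : Matrix (Fin 2) (Fin 2) R) : ℂ := by
  classical
  exact
    if inMM R M then
      if IsUnit (M 0 0) ∧ IsUnit (M 0 1) then
        ((quadraticChar (ResidueField R) (residue R (M 0 0) * residue R (M 0 1)) : ℤ) : ℂ)
      else if IsUnit (M 1 0) ∧ IsUnit (M 1 1) then
        ((quadraticChar (ResidueField R) (residue R (M 1 0) * residue R (M 1 1)) : ℤ) : ℂ)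
      else 0
    else 0

variable (K : Type*) [Field K] [Algebra R K] [IsFractionRing R K]

/-- Extend a function on `Mat₂(R)` to a function on `Mat₂(K)` (vanishing on matrices with
entries not integral over `R`); this realizes `h̃` and `f̃` as functions on `GL₂(K)` vanishing
outside `𝕄`. -/
def extendToK (φR : Matrix (Fin 2) (Fin 2) R → ℂ) (g : Matrix (Fin 2) (Fin 2) K) : ℂ := by
  classical
  exact
    if h : ∃ M : Matrix (Fin 2) (Fin 2) R, M.map (algebraMap R K) = g then φR h.choose else 0

/-- The fiberwise integral along `GL₂(K) → PGL₂(K)` (normalized so that each `Rˣ`-orbit has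
volume 1): `(p_*φ)(g) = (q−1)⁻¹ · Σ_{n ∈ ℤ} Σ_{c ∈ Fˣ} φ(πⁿ·ĉ·g)`. -/
def pStar (π : R) (lft : (ResidueField R)ˣ → Rˣ)
    (φ : Matrix (Fin 2) (Fin 2) K → ℂ) (g : Matrix (Fin 2) (Fin 2) K) : ℂ :=
  ((Fintype.card (ResidueField R) : ℂ) - 1)⁻¹ *
    ∑' n : ℤ, ∑ c : (ResidueField R)ˣ,
      φ (((algebraMap R K π) ^ n * algebraMap R K ((lft c : R))) • g)

end


namespace Stmt7Aux

open Matrix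
open scoped Classical
set_option linter.unusedSectionVars false

noncomputable section

variable (R : Type*) [CommRing R] [IsDomain R] [IsDiscreteValuationRing R]
  [Fintype (ResidueField R)] [DecidableEq (ResidueField R)]

/-- complex-valued quadratic character -/
def qc (x : ResidueField R) : ℂ := ((quadraticChar (ResidueField R) x : ℤ) : ℂ)

variable {R}

lemma qc_zero : qc R (0 : ResidueField R) = 0 := by simp [qc]

lemma qc_mul (x y : ResidueField R) : qc R (x * y) = qc R x * qc R y := by
  unfold qc
  rw [_root_.map_mul (quadraticChar (ResidueField R))]
  push_cast
  ring

lemma qc_dichot {x : ResidueField R} (hx : x ≠ 0) : qc R x = 1 ∨ qc R x = -1 := by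
  rcases quadraticChar_dichotomy hx with h | h <;> [left; right] <;> simp [qc, h]

lemma qc_sq {x : ResidueField R} (hx : x ≠ 0) : qc R x * qc R x = 1 := by
  rcases qc_dichot hx with h | h <;> rw [h] <;> norm_num

variable (R) in
/-- the factor `χ(v₁v₂)(1+χ(w₁w₂))` attached to a rank one matrix mod `m`. -/
def psi2 (N : Matrix (Fin 2) (Fin 2) (ResidueField R)) : ℂ :=
  if N 0 0 ≠ 0 ∧ N 1 0 ≠ 0 then qc R (N 0 0 * N 1 0) * (1 + qc R (N 0 0 * N 0 1))
  else if N 0 1 ≠ 0 ∧ N 1 1 ≠ 0 then qc R (N 0 1 * N 1 1) * (1 + qc R (N 1 0 * N 1 1))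
  else 0

lemma psi2_rows (α δ : ResidueField R) (hα : α ≠ 0) (hδ : δ ≠ 0)
    (N M : Matrix (Fin 2) (Fin 2) (ResidueField R))
    (h00 : M 0 0 = α * N 0 0) (h01 : M 0 1 = α * N 0 1)
    (h10 : M 1 0 = δ * N 1 0) (h11 : M 1 1 = δ * N 1 1) :
    psi2 R M = qc R α * qc R δ * psi2 R N := by
  unfold psi2
  rw [h00, h01, h10, h11]
  have c1 : (α * N 0 0 ≠ 0 ∧ δ * N 1 0 ≠ 0) ↔ (N 0 0 ≠ 0 ∧ N 1 0 ≠ 0) := by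
    simp [mul_ne_zero_iff, hα, hδ]
  have c2 : (α * N 0 1 ≠ 0 ∧ δ * N 1 1 ≠ 0) ↔ (N 0 1 ≠ 0 ∧ N 1 1 ≠ 0) := by
    simp [mul_ne_zero_iff, hα, hδ]
  rw [if_congr c1 rfl rfl, if_congr c2 rfl rfl]
  split_ifs with h1 h2
  · simp only [qc_mul]
    rcases qc_dichot hα with hA | hA <;> rcases qc_dichot hδ with hD | hD <;>
      rw [hA, hD] <;> ring
  · simp only [qc_mul]
    rcases qc_dichot hα with hA | hA <;> rcases qc_dichot hδ with hD | hD <;>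
      rw [hA, hD] <;> ring
  · ring

lemma psi2_diag_mul (α δ : ResidueField R) (hα : α ≠ 0) (hδ : δ ≠ 0)
    (N : Matrix (Fin 2) (Fin 2) (ResidueField R)) :
    psi2 R (Matrix.diagonal ![α, δ] * N) = qc R α * qc R δ * psi2 R N := by
  refine psi2_rows α δ hα hδ N _ ?_ ?_ ?_ ?_ <;> simp [Matrix.diagonal_mul]

lemma psi2_smul (v : ResidueField R) (hv : v ≠ 0)
    (N : Matrix (Fin 2) (Fin 2) (ResidueField R)) :
    psi2 R (v • N) = psi2 R N := by
  have h := psi2_rows v v hv hv N (v • N) (by simp) (by simp) (by simp) (by simp)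
  rw [h, qc_sq hv, one_mul]

lemma isUnit_iff_res {x : R} : IsUnit x ↔ residue R x ≠ 0 := by
  rw [Ne, IsLocalRing.residue_eq_zero_iff, IsLocalRing.mem_maximalIdeal, mem_nonunits_iff,
    not_not]

lemma res_unit_ne_zero (u : Rˣ) : residue R (u : R) ≠ 0 :=
  isUnit_iff_res.mp u.isUnit

lemma res_unit_inv (u : Rˣ) :
    residue R ((u⁻¹ : Rˣ) : R) = (residue R (u : R))⁻¹ := by
  have h : residue R ((u⁻¹ : Rˣ) : R) * residue R (u : R) = 1 := by
    rw [← _root_.map_mul (residue R), Units.inv_mul, _root_.map_one]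
  exact eq_inv_of_mul_eq_one_left h

variable (R) in
/-- reduction of a matrix mod the maximal ideal -/
def redM (M : Matrix (Fin 2) (Fin 2) R) : Matrix (Fin 2) (Fin 2) (ResidueField R) :=
  M.map (residue R)

lemma redM_apply (M : Matrix (Fin 2) (Fin 2) R) (i j : Fin 2) :
    redM R M i j = residue R (M i j) := rfl

lemma redM_det (M : Matrix (Fin 2) (Fin 2) R) : (redM R M).det = residue R M.det := by
  rw [redM, ← RingHom.mapMatrix_apply, ← RingHom.map_det]

lemma unit_mul_mem_iff (v : Rˣ) (I : Ideal R) (x : R) : (v : R) * x ∈ I ↔ x ∈ I := by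
  constructor
  · intro h
    have h2 := I.mul_mem_left ((v⁻¹ : Rˣ) : R) h
    rwa [← mul_assoc, Units.inv_mul, one_mul] at h2
  · exact fun h => I.mul_mem_left _ h

lemma inMM_unit_smul_iff (v : Rˣ) (M : Matrix (Fin 2) (Fin 2) R) :
    inMM R ((v : R) • M) ↔ inMM R M := by
  have hdet : ((v : R) • M).det = ((v * v : Rˣ) : R) * M.det := by
    rw [Matrix.det_smul, Fintype.card_fin, pow_two, Units.val_mul]
  simp only [inMM, hdet, unit_mul_mem_iff]

lemma inMM_mul_diag_iff (a d : Rˣ) (M : Matrix (Fin 2) (Fin 2) R) :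
    inMM R (M * Matrix.diagonal ![(a : R), (d : R)]) ↔ inMM R M := by
  have hdet : (M * Matrix.diagonal ![(a : R), (d : R)]).det = ((a * d : Rˣ) : R) * M.det := by
    rw [Matrix.det_mul, Matrix.det_diagonal, Fin.prod_univ_two]
    simp only [Matrix.cons_val_zero, Matrix.cons_val_one, Matrix.head_cons, Units.val_mul]
    try ring
  simp only [inMM, hdet, unit_mul_mem_iff]

lemma inMM_diag_mul_iff (a d : Rˣ) (M : Matrix (Fin 2) (Fin 2) R) :
    inMM R (Matrix.diagonal ![(a : R), (d : R)] * M) ↔ inMM R M := by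
  have hdet : (Matrix.diagonal ![(a : R), (d : R)] * M).det = ((a * d : Rˣ) : R) * M.det := by
    rw [Matrix.det_mul, Matrix.det_diagonal, Fin.prod_univ_two]
    simp only [Matrix.cons_val_zero, Matrix.cons_val_one, Matrix.head_cons, Units.val_mul]
    try ring
  simp only [inMM, hdet, unit_mul_mem_iff]

lemma redM_det_zero {M : Matrix (Fin 2) (Fin 2) R} (h : inMM R M) : (redM R M).det = 0 := by
  rw [redM_det, IsLocalRing.residue_eq_zero_iff]; exact h.1

lemma redM_ne_zero {M : Matrix (Fin 2) (Fin 2) R} (h : inMM R M) : redM R M ≠ 0 := by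
  intro h0
  have hm : ∀ i j, M i j ∈ maximalIdeal R := by
    intro i j
    have h1 : redM R M i j = 0 := by rw [h0]; rfl
    rwa [redM_apply, IsLocalRing.residue_eq_zero_iff] at h1
  apply h.2
  rw [Matrix.det_fin_two, pow_two]
  exact Submodule.sub_mem _ (Ideal.mul_mem_mul (hm 0 0) (hm 1 1))
    (Ideal.mul_mem_mul (hm 0 1) (hm 1 0))

lemma redM_unit_smul (v : Rˣ) (M : Matrix (Fin 2) (Fin 2) R) :
    redM R ((v : R) • M) = residue R (v : R) • redM R M := by
  ext i j
  simp [redM, Matrix.map_apply, Matrix.smul_apply, smul_eq_mul, _root_.map_mul]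

end

end Stmt7Aux

namespace Stmt7Aux

noncomputable section

set_option linter.unusedSectionVars false

variable {R : Type*} [CommRing R] [IsDomain R] [IsDiscreteValuationRing R]
  [Fintype (ResidueField R)] [DecidableEq (ResidueField R)]
  (K : Type*) [Field K] [Algebra R K] [IsFractionRing R K] (π : R)

/-- the scalar `π^n·u` viewed inside `K` -/
def sc (n : ℤ) (u : Rˣ) : K := (algebraMap R K π) ^ n * algebraMap R K (u : R)

lemma mapK_injective :
    Function.Injective fun M : Matrix (Fin 2) (Fin 2) R => M.map (algebraMap R K) := by
  intro M M' h
  ext i j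
  exact IsFractionRing.injective R K (congrFun (congrFun h i) j)

lemma mapK_smul (r : R) (M : Matrix (Fin 2) (Fin 2) R) :
    ((r • M).map (algebraMap R K)) = (algebraMap R K r) • (M.map (algebraMap R K)) := by
  ext i j
  simp [Matrix.map_apply, Matrix.smul_apply, smul_eq_mul, _root_.map_mul]

lemma pi_ne_zero (hπ : maximalIdeal R = Ideal.span {π}) : π ≠ 0 := by
  intro h
  apply IsDiscreteValuationRing.not_a_field R
  rw [hπ, h]
  exact Ideal.span_singleton_eq_bot.mpr rfl

lemma zK_ne_zero (hπ : maximalIdeal R = Ideal.span {π}) : algebraMap R K π ≠ 0 :=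
  (map_ne_zero_iff _ (IsFractionRing.injective R K)).mpr (pi_ne_zero π hπ)

lemma uK_ne_zero (u : Rˣ) : algebraMap R K (u : R) ≠ 0 :=
  (u.isUnit.map (algebraMap R K)).ne_zero

lemma map_unit_inv (u : Rˣ) :
    algebraMap R K ((u⁻¹ : Rˣ) : R) = (algebraMap R K (u : R))⁻¹ := by
  have h : algebraMap R K ((u⁻¹ : Rˣ) : R) * algebraMap R K (u : R) = 1 := by
    rw [← _root_.map_mul (algebraMap R K), Units.inv_mul, _root_.map_one]
  exact eq_inv_of_mul_eq_one_left h

lemma sc_ne_zero (hπ : maximalIdeal R = Ideal.span {π}) (n : ℤ) (u : Rˣ) :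
    sc K π n u ≠ 0 :=
  mul_ne_zero (zpow_ne_zero _ (zK_ne_zero K π hπ)) (uK_ne_zero K u)

lemma sc_mul (hπ : maximalIdeal R = Ideal.span {π}) (n m : ℤ) (u v : Rˣ) :
    sc K π n u * sc K π m v = sc K π (n + m) (u * v) := by
  unfold sc
  rw [zpow_add₀ (zK_ne_zero K π hπ), Units.val_mul, _root_.map_mul (algebraMap R K)]
  ring

lemma sc_zero_one : sc K π 0 1 = 1 := by
  simp [sc]

variable {K π}

lemma sc_cancel (hπ : maximalIdeal R = Ideal.span {π}) (n : ℤ) (u : Rˣ)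
    {V : Type*} [AddCommMonoid V] [Module K V] (x : V) :
    sc K π (-n) u⁻¹ • sc K π n u • x = x := by
  rw [smul_smul, sc_mul K π hπ]
  norm_num
  rw [sc_zero_one, one_smul]

/-- the key uniqueness: two integral matrices in `𝕄` differing by a scalar `π^m·v`
must have `m = 0` and differ by the unit `v`. -/
lemma uniq (hπ : maximalIdeal R = Ideal.span {π}) {M M' : Matrix (Fin 2) (Fin 2) R}
    (hM : inMM R M) (hM' : inMM R M') {m : ℤ} {v : Rˣ}
    (h : M'.map (algebraMap R K) = sc K π m v • M.map (algebraMap R K)) :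
    m = 0 ∧ M' = (v : R) • M := by
  have edet : ∀ M₀ : Matrix (Fin 2) (Fin 2) R,
      (M₀.map (algebraMap R K)).det = algebraMap R K M₀.det := by
    intro M₀
    rw [← RingHom.mapMatrix_apply, ← RingHom.map_det]
  have main : ∀ (k : ℕ), k ≠ 0 → ∀ (A B : Matrix (Fin 2) (Fin 2) R) (w : Rˣ), inMM R B →
      algebraMap R K B.det = (sc K π (k : ℤ) w) ^ 2 * algebraMap R K A.det → False := by
    intro k hk A B w hB hBA
    have hBdet : B.det = π ^ (2 * k) * ((w : R) ^ 2 * A.det) := by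
      apply IsFractionRing.injective R K
      rw [hBA, sc, zpow_natCast, _root_.map_mul (algebraMap R K),
        _root_.map_mul (algebraMap R K), map_pow, map_pow]
      ring
    apply hB.2
    rw [hπ, Ideal.span_singleton_pow, Ideal.mem_span_singleton]
    obtain ⟨j, h2k⟩ : ∃ j, 2 * k = 2 + j := ⟨2 * k - 2, by omega⟩
    refine ⟨π ^ j * ((w : R) ^ 2 * A.det), ?_⟩
    rw [hBdet, h2k, pow_add, mul_assoc]
  have hdet : ∀ {A B : Matrix (Fin 2) (Fin 2) R} {s : ℤ} {w : Rˣ},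
      B.map (algebraMap R K) = sc K π s w • A.map (algebraMap R K) →
      algebraMap R K B.det = (sc K π s w) ^ 2 * algebraMap R K A.det := by
    intro A B s w hAB
    have h2 := congrArg Matrix.det hAB
    rwa [Matrix.det_smul, Fintype.card_fin, edet, edet] at h2
  rcases lt_trichotomy m 0 with hm | hm | hm
  · exfalso
    have h' : M.map (algebraMap R K) = sc K π (-m) v⁻¹ • M'.map (algebraMap R K) := by
      rw [h, sc_cancel hπ]
    obtain ⟨k, hk⟩ : ∃ k : ℕ, -m = (k : ℤ) := ⟨(-m).toNat, (Int.toNat_of_nonneg (by omega)).symm⟩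
    have hk0 : k ≠ 0 := by omega
    rw [hk] at h'
    exact main k hk0 M' M v⁻¹ hM (hdet h')
  · refine ⟨hm, ?_⟩
    subst hm
    apply mapK_injective K
    show M'.map (algebraMap R K) = ((v : R) • M).map (algebraMap R K)
    rw [h, mapK_smul]
    unfold sc
    rw [zpow_zero, one_mul]
  · exfalso
    obtain ⟨k, hk⟩ : ∃ k : ℕ, m = (k : ℤ) := ⟨m.toNat, (Int.toNat_of_nonneg (by omega)).symm⟩
    have hk0 : k ≠ 0 := by omega
    rw [hk] at h
    exact main k hk0 M M' v hM' (hdet h)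

lemma shift (hπ : maximalIdeal R = Ideal.span {π}) {g : Matrix (Fin 2) (Fin 2) K} {n : ℤ}
    {u : Rˣ} {M : Matrix (Fin 2) (Fin 2) R}
    (h : M.map (algebraMap R K) = sc K π n u • g) (s : ℤ) (t : Rˣ) :
    M.map (algebraMap R K) = sc K π (n - s) (u * t⁻¹) • (sc K π s t • g) := by
  rw [smul_smul, sc_mul K π hπ, h]
  have h1 : n - s + s = n := by omega
  have h2 : u * t⁻¹ * t = u := inv_mul_cancel_right u t
  rw [h1, h2]

lemma rel (hπ : maximalIdeal R = Ideal.span {π}) {g : Matrix (Fin 2) (Fin 2) K}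
    {n m : ℤ} {v w : Rˣ} {M M' : Matrix (Fin 2) (Fin 2) R}
    (h1 : M.map (algebraMap R K) = sc K π n v • g)
    (h2 : M'.map (algebraMap R K) = sc K π m w • g) :
    M'.map (algebraMap R K) = sc K π (m - n) (w * v⁻¹) • M.map (algebraMap R K) := by
  have hg : g = sc K π (-n) v⁻¹ • M.map (algebraMap R K) := by
    rw [h1, sc_cancel hπ]
  rw [h2, hg, smul_smul, sc_mul K π hπ]
  have h3 : m + -n = m - n := by omega
  rw [h3]

variable (R K π) in
/-- some `πⁿ·u`-multiple of `g` is integral and lies in `𝕄`. -/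
def cond (g : Matrix (Fin 2) (Fin 2) K) : Prop :=
  ∃ p : ℤ × Rˣ × Matrix (Fin 2) (Fin 2) R, inMM R p.2.2 ∧
    (p.2.2).map (algebraMap R K) = sc K π p.1 p.2.1 • g

lemma cond_smul_sc (hπ : maximalIdeal R = Ideal.span {π}) (s : ℤ) (t : Rˣ)
    {g : Matrix (Fin 2) (Fin 2) K} (h : cond R K π g) : cond R K π (sc K π s t • g) := by
  obtain ⟨⟨n, u, M⟩, hM, hmap⟩ := h
  exact ⟨⟨n - s, u * t⁻¹, M⟩, hM, shift hπ hmap s t⟩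

lemma cond_smul_sc_iff (hπ : maximalIdeal R = Ideal.span {π}) (s : ℤ) (t : Rˣ)
    (g : Matrix (Fin 2) (Fin 2) K) : cond R K π (sc K π s t • g) ↔ cond R K π g := by
  refine ⟨fun h => ?_, cond_smul_sc hπ s t⟩
  have h2 := cond_smul_sc hπ (-s) t⁻¹ h
  rwa [sc_cancel hπ] at h2

lemma exists_rep (hπ : maximalIdeal R = Ideal.span {π}) (lam : Kˣ) :
    ∃ (s : ℤ) (t : Rˣ), (lam : K) = sc K π s t := by
  obtain ⟨x, y, hy, hxy⟩ := IsFractionRing.div_surjective (A := R) (lam : K)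
  have hy0 : y ≠ 0 := nonZeroDivisors.ne_zero hy
  have hx0 : x ≠ 0 := by
    intro h0
    apply lam.ne_zero
    rw [← hxy, h0, map_zero, zero_div]
  have hirr : Irreducible π :=
    IsDiscreteValuationRing.irreducible_of_span_eq_maximalIdeal π (pi_ne_zero π hπ) hπ
  obtain ⟨a, u₁, hxu⟩ := IsDiscreteValuationRing.eq_unit_mul_pow_irreducible hx0 hirr
  obtain ⟨b, u₂, hyu⟩ := IsDiscreteValuationRing.eq_unit_mul_pow_irreducible hy0 hirr
  refine ⟨(a : ℤ) - (b : ℤ), u₁ * u₂⁻¹, ?_⟩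
  have hz := zK_ne_zero K π hπ
  rw [← hxy, hxu, hyu, sc, _root_.map_mul (algebraMap R K), _root_.map_mul (algebraMap R K),
    map_pow, map_pow, Units.val_mul, _root_.map_mul (algebraMap R K), map_unit_inv,
    zpow_sub₀ hz, zpow_natCast, zpow_natCast]
  rw [div_eq_iff (by exact mul_ne_zero (uK_ne_zero K u₂) (pow_ne_zero _ hz))]
  field_simp

end

end Stmt7Aux

namespace Stmt7Aux

noncomputable section

set_option linter.unusedSectionVars false
open scoped Classical

variable {R : Type*} [CommRing R] [IsDomain R] [IsDiscreteValuationRing R]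
  [Fintype (ResidueField R)] [DecidableEq (ResidueField R)]
  (K : Type*) [Field K] [Algebra R K] [IsFractionRing R K] (π : R)

variable (R) in
def phi1 (g : Matrix (Fin 2) (Fin 2) K) : ℂ := if cond R K π g then 1 else 0

variable (R) in
def phi2 (g : Matrix (Fin 2) (Fin 2) K) : ℂ :=
  if h : cond R K π g then psi2 R (redM R h.choose.2.2) else 0

variable {K π}

lemma phi2_eq (hπ : maximalIdeal R = Ideal.span {π}) {g : Matrix (Fin 2) (Fin 2) K}
    {n : ℤ} {u : Rˣ} {M : Matrix (Fin 2) (Fin 2) R} (hM : inMM R M)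
    (hmap : M.map (algebraMap R K) = sc K π n u • g) :
    phi2 R K π g = psi2 R (redM R M) := by
  have hc : cond R K π g := ⟨⟨n, u, M⟩, hM, hmap⟩
  rw [phi2, dif_pos hc]
  obtain ⟨hM0, hmap0⟩ := hc.choose_spec
  have hrel := rel hπ hmap hmap0
  obtain ⟨-, hMM⟩ := uniq hπ hM hM0 hrel
  rw [hMM, redM_unit_smul, psi2_smul _ (res_unit_ne_zero _)]

lemma phi1_scalar (hπ : maximalIdeal R = Ideal.span {π}) (lam : Kˣ)
    (g : Matrix (Fin 2) (Fin 2) K) : phi1 R K π ((lam : K) • g) = phi1 R K π g := by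
  obtain ⟨s, t, hst⟩ := exists_rep hπ lam
  rw [phi1, phi1, hst]
  exact if_congr (cond_smul_sc_iff hπ s t g) rfl rfl

lemma phi2_scalar (hπ : maximalIdeal R = Ideal.span {π}) (lam : Kˣ)
    (g : Matrix (Fin 2) (Fin 2) K) : phi2 R K π ((lam : K) • g) = phi2 R K π g := by
  obtain ⟨s, t, hst⟩ := exists_rep hπ lam
  rw [hst]
  by_cases hc : cond R K π g
  · obtain ⟨⟨n, u, M⟩, hM, hmap⟩ := id hc
    rw [phi2_eq hπ hM (shift hπ hmap s t), phi2_eq hπ hM hmap]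
  · rw [phi2, phi2, dif_neg hc, dif_neg (fun h => hc ((cond_smul_sc_iff hπ s t g).mp h))]

/-- mapping a right diagonal multiple to `K` -/
lemma mapK_mul_diag (M : Matrix (Fin 2) (Fin 2) R) (a d : Rˣ) :
    (M * Matrix.diagonal ![(a : R), (d : R)]).map (algebraMap R K) =
      M.map (algebraMap R K) *
        Matrix.diagonal ![algebraMap R K (a : R), algebraMap R K (d : R)] := by
  rw [Matrix.map_mul]
  have hfun : (fun m => algebraMap R K (![(a : R), (d : R)] m)) =
      ![algebraMap R K (a : R), algebraMap R K (d : R)] := by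
    funext i
    fin_cases i <;> simp
  rw [Matrix.diagonal_map (map_zero _), hfun]

lemma mapK_diag_mul (M : Matrix (Fin 2) (Fin 2) R) (a d : Rˣ) :
    (Matrix.diagonal ![(a : R), (d : R)] * M).map (algebraMap R K) =
      Matrix.diagonal ![algebraMap R K (a : R), algebraMap R K (d : R)] *
        M.map (algebraMap R K) := by
  rw [Matrix.map_mul]
  have hfun : (fun m => algebraMap R K (![(a : R), (d : R)] m)) =
      ![algebraMap R K (a : R), algebraMap R K (d : R)] := by
    funext i
    fin_cases i <;> simp
  rw [Matrix.diagonal_map (map_zero _), hfun]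

lemma diag_mul_diag_inv (a d : Rˣ) :
    (Matrix.diagonal ![algebraMap R K (a : R), algebraMap R K (d : R)] :
        Matrix (Fin 2) (Fin 2) K) *
      Matrix.diagonal ![algebraMap R K ((a⁻¹ : Rˣ) : R), algebraMap R K ((d⁻¹ : Rˣ) : R)]
      = 1 := by
  rw [Matrix.diagonal_mul_diagonal]
  have hfun : (fun i => ![algebraMap R K (a : R), algebraMap R K (d : R)] i *
      ![algebraMap R K ((a⁻¹ : Rˣ) : R), algebraMap R K ((d⁻¹ : Rˣ) : R)] i) =
      (fun _ => (1 : K)) := by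
    funext i
    fin_cases i <;>
      simp [← _root_.map_mul (algebraMap R K), Units.mul_inv]
  rw [hfun, Matrix.diagonal_one]

lemma cond_mul_diag (hπ : maximalIdeal R = Ideal.span {π}) (a d : Rˣ)
    {g : Matrix (Fin 2) (Fin 2) K} (h : cond R K π g) :
    cond R K π (g * Matrix.diagonal ![algebraMap R K (a : R), algebraMap R K (d : R)]) := by
  obtain ⟨⟨n, u, M⟩, hM, hmap⟩ := h
  refine ⟨⟨n, u, M * Matrix.diagonal ![(a : R), (d : R)]⟩,
    (inMM_mul_diag_iff a d M).mpr hM, ?_⟩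
  rw [mapK_mul_diag, hmap, Matrix.smul_mul]

lemma cond_mul_diag_iff (hπ : maximalIdeal R = Ideal.span {π}) (a d : Rˣ)
    (g : Matrix (Fin 2) (Fin 2) K) :
    cond R K π (g * Matrix.diagonal ![algebraMap R K (a : R), algebraMap R K (d : R)]) ↔
      cond R K π g := by
  refine ⟨fun h => ?_, cond_mul_diag hπ a d⟩
  have h2 := cond_mul_diag hπ a⁻¹ d⁻¹ h
  rwa [Matrix.mul_assoc, diag_mul_diag_inv, Matrix.mul_one] at h2

lemma cond_diag_mul (hπ : maximalIdeal R = Ideal.span {π}) (a d : Rˣ)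
    {g : Matrix (Fin 2) (Fin 2) K} (h : cond R K π g) :
    cond R K π (Matrix.diagonal ![algebraMap R K (a : R), algebraMap R K (d : R)] * g) := by
  obtain ⟨⟨n, u, M⟩, hM, hmap⟩ := h
  refine ⟨⟨n, u, Matrix.diagonal ![(a : R), (d : R)] * M⟩,
    (inMM_diag_mul_iff a d M).mpr hM, ?_⟩
  rw [mapK_diag_mul, hmap, Matrix.mul_smul]

lemma cond_diag_mul_iff (hπ : maximalIdeal R = Ideal.span {π}) (a d : Rˣ)
    (g : Matrix (Fin 2) (Fin 2) K) :
    cond R K π (Matrix.diagonal ![algebraMap R K (a : R), algebraMap R K (d : R)] * g) ↔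
      cond R K π g := by
  refine ⟨fun h => ?_, cond_diag_mul hπ a d⟩
  have h2 := cond_diag_mul hπ a⁻¹ d⁻¹ h
  rwa [← Matrix.mul_assoc, show (Matrix.diagonal ![algebraMap R K ((a⁻¹ : Rˣ) : R),
      algebraMap R K ((d⁻¹ : Rˣ) : R)] : Matrix (Fin 2) (Fin 2) K) *
      Matrix.diagonal ![algebraMap R K (a : R), algebraMap R K (d : R)] = 1 from by
        simpa using diag_mul_diag_inv (R := R) (K := K) a⁻¹ d⁻¹, Matrix.one_mul] at h2

lemma phi1_diag (hπ : maximalIdeal R = Ideal.span {π}) (a d : Rˣ)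
    (g : Matrix (Fin 2) (Fin 2) K) :
    phi1 R K π (g * Matrix.diagonal ![algebraMap R K (a : R), algebraMap R K (d : R)]) =
      phi1 R K π g := by
  rw [phi1, phi1]
  exact if_congr (cond_mul_diag_iff hπ a d g) rfl rfl

lemma redM_diag_mul (a d : Rˣ) (M : Matrix (Fin 2) (Fin 2) R) :
    redM R (Matrix.diagonal ![(a : R), (d : R)] * M) =
      Matrix.diagonal ![residue R (a : R), residue R (d : R)] * redM R M := by
  rw [redM, redM, Matrix.map_mul]
  have hfun : (fun m => residue R (![(a : R), (d : R)] m)) =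
      ![residue R (a : R), residue R (d : R)] := by
    funext i
    fin_cases i <;> simp
  rw [Matrix.diagonal_map (map_zero _), hfun]

lemma phi2_diag (hπ : maximalIdeal R = Ideal.span {π}) (a d : Rˣ)
    (g : Matrix (Fin 2) (Fin 2) K) :
    phi2 R K π (Matrix.diagonal ![algebraMap R K (a : R), algebraMap R K (d : R)] * g) =
      qc R (residue R (a : R)) * qc R (residue R (d : R)) * phi2 R K π g := by
  by_cases hc : cond R K π g
  · obtain ⟨⟨n, u, M⟩, hM, hmap⟩ := id hc
    have hM' : inMM R (Matrix.diagonal ![(a : R), (d : R)] * M) :=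
      (inMM_diag_mul_iff a d M).mpr hM
    have hmap' : (Matrix.diagonal ![(a : R), (d : R)] * M).map (algebraMap R K) =
        sc K π n u •
          (Matrix.diagonal ![algebraMap R K (a : R), algebraMap R K (d : R)] * g) := by
      rw [mapK_diag_mul, hmap, Matrix.mul_smul]
    rw [phi2_eq hπ hM' hmap', phi2_eq hπ hM hmap, redM_diag_mul,
      psi2_diag_mul _ _ (res_unit_ne_zero a) (res_unit_ne_zero d)]
  · rw [phi2, phi2, dif_neg hc, dif_neg (fun h => hc ((cond_diag_mul_iff hπ a d g).mp h))]
    ring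

end

end Stmt7Aux

namespace Stmt7Aux

noncomputable section

set_option linter.unusedSectionVars false
set_option maxHeartbeats 2000000
open scoped Classical

variable {R : Type*} [CommRing R] [IsDomain R] [IsDiscreteValuationRing R]
  [Fintype (ResidueField R)] [DecidableEq (ResidueField R)]

lemma char_ne_two (hodd : Odd (Fintype.card (ResidueField R))) :
    ringChar (ResidueField R) ≠ 2 := by
  intro h
  have h2 := FiniteField.even_card_of_char_two h
  obtain ⟨k, hk⟩ := hodd
  omega

lemma sum_qc_units (hodd : Odd (Fintype.card (ResidueField R))) :
    ∑ e : (ResidueField R)ˣ, qc R (e : ResidueField R) = 0 := by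
  have h0 : ∑ a : ResidueField R, qc R a = 0 := by
    have h := quadraticChar_sum_zero (char_ne_two hodd)
    have h2 : ((∑ a : ResidueField R, quadraticChar (ResidueField R) a : ℤ) : ℂ) = 0 := by
      rw [h]; simp
    rw [← h2]
    push_cast [qc]
    rfl
  have h1 : ∑ a : ResidueField R, qc R a =
      ∑ a ∈ Finset.univ.filter (fun a : ResidueField R => a ≠ 0), qc R a := by
    rw [← Finset.sum_filter_add_sum_filter_not Finset.univ
      (fun a : ResidueField R => a ≠ 0) (fun a => qc R a)]
    have hz : ∑ a ∈ Finset.univ.filter (fun a : ResidueField R => ¬ a ≠ 0), qc R a = 0 := by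
      apply Finset.sum_eq_zero
      intro a ha
      simp only [Finset.mem_filter, not_not] at ha
      rw [ha.2, qc_zero]
    rw [hz, add_zero]
  have h2 : ∑ a ∈ Finset.univ.filter (fun a : ResidueField R => a ≠ 0), qc R a =
      ∑ e : (ResidueField R)ˣ, qc R (e : ResidueField R) := by
    rw [Finset.sum_subtype (p := fun a : ResidueField R => a ≠ 0)
      (Finset.univ.filter (fun a : ResidueField R => a ≠ 0))
      (fun a => by simp) (fun a => qc R a)]
    rw [← Equiv.sum_comp (unitsEquivNeZero (G₀ := ResidueField R))
      (fun x : {a : ResidueField R // a ≠ 0} => qc R (x : ResidueField R))]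
    exact Finset.sum_congr rfl fun u _ => by simp [unitsEquivNeZero]
  rw [← h2, ← h1, h0]

lemma card_units_cast :
    ((Fintype.card (ResidueField R)ˣ : ℕ) : ℂ) = (Fintype.card (ResidueField R) : ℂ) - 1 := by
  rw [Fintype.card_units]
  have h1 : 1 ≤ Fintype.card (ResidueField R) := Fintype.card_pos
  push_cast [Nat.cast_sub h1]
  ring

lemma card_sub_one_ne_zero : ((Fintype.card (ResidueField R) : ℂ)) - 1 ≠ 0 := by
  have h2 : 1 < Fintype.card (ResidueField R) := Fintype.one_lt_card
  intro h
  rw [sub_eq_zero] at h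
  have : (Fintype.card (ResidueField R) : ℂ) = ((1 : ℕ) : ℂ) := by rw [h]; norm_num
  have := Nat.cast_injective (R := ℂ) this
  omega

variable (R) in
/-- the value of `h̃` on the unit scaling of a matrix in `𝕄`, in terms of the residues -/
def hresF (e : ResidueField R) (N : Matrix (Fin 2) (Fin 2) (ResidueField R)) : ℂ :=
  if ∀ i j, N i j ≠ 0 then
    (2 : ℂ)⁻¹ * ∏ i : Fin 2, ∏ j : Fin 2,
      ((1 + quadraticChar (ResidueField R) (e * N i j) : ℤ) : ℂ)
  else
    ∏ i : Fin 2, ∏ j : Fin 2, ((1 + quadraticChar (ResidueField R) (e * N i j) : ℤ) : ℂ)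

variable (R) in
def fresF (e : ResidueField R) (N : Matrix (Fin 2) (Fin 2) (ResidueField R)) : ℂ :=
  if N 0 0 ≠ 0 ∧ N 0 1 ≠ 0 then
    ((quadraticChar (ResidueField R) (e * N 0 0 * (e * N 0 1)) : ℤ) : ℂ)
  else if N 1 0 ≠ 0 ∧ N 1 1 ≠ 0 then
    ((quadraticChar (ResidueField R) (e * N 1 0 * (e * N 1 1)) : ℤ) : ℂ)
  else 0

lemma htilde_unit_smul (v : Rˣ) (M : Matrix (Fin 2) (Fin 2) R) (hM : inMM R M) :
    htildeR R ((v : R) • M) = hresF R (residue R (v : R)) (redM R M) := by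
  have hin : inMM R ((v : R) • M) := (inMM_unit_smul_iff v M).mpr hM
  have hcond : (∀ i j, IsUnit (((v : R) • M) i j)) ↔ (∀ i j, redM R M i j ≠ 0) := by
    refine forall₂_congr fun i j => ?_
    rw [Matrix.smul_apply, smul_eq_mul, Units.isUnit_units_mul, isUnit_iff_res, redM_apply]
  have hfac : ∀ i j : Fin 2, residue R (((v : R) • M) i j) =
      residue R (v : R) * redM R M i j := by
    intro i j
    rw [Matrix.smul_apply, smul_eq_mul, _root_.map_mul (residue R), redM_apply]
  simp only [htildeR, hresF, hfac]
  rw [if_pos hin]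
  split_ifs with h1 h2 h2
  · rfl
  · exact absurd (hcond.mp h1) h2
  · exact absurd (hcond.mpr h2) h1
  · rfl

lemma ftilde_unit_smul (v : Rˣ) (M : Matrix (Fin 2) (Fin 2) R) (hM : inMM R M) :
    ftildeR R ((v : R) • M) = fresF R (residue R (v : R)) (redM R M) := by
  have hin : inMM R ((v : R) • M) := (inMM_unit_smul_iff v M).mpr hM
  have hcond : ∀ i j : Fin 2, IsUnit (((v : R) • M) i j) ↔ redM R M i j ≠ 0 := by
    intro i j
    rw [Matrix.smul_apply, smul_eq_mul, Units.isUnit_units_mul, isUnit_iff_res, redM_apply]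
  have hfac : ∀ i j : Fin 2, residue R (((v : R) • M) i j) =
      residue R (v : R) * redM R M i j := by
    intro i j
    rw [Matrix.smul_apply, smul_eq_mul, _root_.map_mul (residue R), redM_apply]
  simp only [ftildeR, fresF, hfac]
  rw [if_pos hin]
  by_cases hA : redM R M 0 0 ≠ 0 ∧ redM R M 0 1 ≠ 0
  · rw [if_pos (⟨(hcond 0 0).mpr hA.1, (hcond 0 1).mpr hA.2⟩ :
      IsUnit (((v : R) • M) 0 0) ∧ IsUnit (((v : R) • M) 0 1)), if_pos hA]
  · rw [if_neg (fun h => hA ⟨(hcond 0 0).mp h.1, (hcond 0 1).mp h.2⟩), if_neg hA]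
    by_cases hB : redM R M 1 0 ≠ 0 ∧ redM R M 1 1 ≠ 0
    · rw [if_pos (⟨(hcond 1 0).mpr hB.1, (hcond 1 1).mpr hB.2⟩ :
        IsUnit (((v : R) • M) 1 0) ∧ IsUnit (((v : R) • M) 1 1)), if_pos hB]
    · rw [if_neg (fun h => hB ⟨(hcond 1 0).mp h.1, (hcond 1 1).mp h.2⟩), if_neg hB]

lemma htilde_not {M : Matrix (Fin 2) (Fin 2) R} (h : ¬ inMM R M) : htildeR R M = 0 := by
  simp only [htildeR]
  rw [if_neg h]

lemma ftilde_not {M : Matrix (Fin 2) (Fin 2) R} (h : ¬ inMM R M) : ftildeR R M = 0 := by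
  simp only [ftildeR]
  rw [if_neg h]

end

end Stmt7Aux

namespace Stmt7Aux

noncomputable section

set_option linter.unusedSectionVars false
set_option maxHeartbeats 4000000
open scoped Classical

variable {R : Type*} [CommRing R] [IsDomain R] [IsDiscreteValuationRing R]
  [Fintype (ResidueField R)] [DecidableEq (ResidueField R)]

lemma sum_hf (hodd : Odd (Fintype.card (ResidueField R)))
    {N : Matrix (Fin 2) (Fin 2) (ResidueField R)} (hdet : N.det = 0) (hN : N ≠ 0) :
    ∑ e : (ResidueField R)ˣ, (hresF R (e : ResidueField R) N - fresF R (e : ResidueField R) N)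
      = ((Fintype.card (ResidueField R) : ℂ) - 1) * (1 + psi2 R N) := by
  set C0 : ℂ :=
    (if ∀ i j, N i j ≠ 0 then (2 : ℂ)⁻¹ else 1) *
      (1 + (qc R (N 0 0) * qc R (N 0 1) + qc R (N 0 0) * qc R (N 1 0)
        + qc R (N 0 0) * qc R (N 1 1) + qc R (N 0 1) * qc R (N 1 0)
        + qc R (N 0 1) * qc R (N 1 1) + qc R (N 1 0) * qc R (N 1 1))
        + qc R (N 0 0) * qc R (N 0 1) * qc R (N 1 0) * qc R (N 1 1))
      - (if N 0 0 ≠ 0 ∧ N 0 1 ≠ 0 then qc R (N 0 0) * qc R (N 0 1)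
        else if N 1 0 ≠ 0 ∧ N 1 1 ≠ 0 then qc R (N 1 0) * qc R (N 1 1) else 0) with hC0
  set C1 : ℂ :=
    (if ∀ i j, N i j ≠ 0 then (2 : ℂ)⁻¹ else 1) *
      (qc R (N 0 0) + qc R (N 0 1) + qc R (N 1 0) + qc R (N 1 1)
        + qc R (N 0 0) * qc R (N 0 1) * qc R (N 1 0)
        + qc R (N 0 0) * qc R (N 0 1) * qc R (N 1 1)
        + qc R (N 0 0) * qc R (N 1 0) * qc R (N 1 1)
        + qc R (N 0 1) * qc R (N 1 0) * qc R (N 1 1)) with hC1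
  have hPoint : ∀ e : (ResidueField R)ˣ,
      hresF R (e : ResidueField R) N - fresF R (e : ResidueField R) N
        = C0 + qc R (e : ResidueField R) * C1 := by
    intro e
    have he : (e : ResidueField R) ≠ 0 := Units.ne_zero e
    have hd := qc_dichot he
    rw [hC0, hC1]
    simp only [qc] at hd ⊢
    simp only [hresF, fresF, Fin.prod_univ_two]
    split_ifs with h1 h2 h3 <;>
      first
      | exact absurd ⟨h1 0 0, h1 0 1⟩ h2
      | (push_cast
         simp only [_root_.map_mul (quadraticChar (ResidueField R))]
         push_cast
         rcases hd with h | h <;> rw [h] <;> ring)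
  rw [Finset.sum_congr rfl fun e _ => hPoint e]
  rw [Finset.sum_add_distrib, Finset.sum_const, ← Finset.sum_mul, sum_qc_units hodd,
    zero_mul, add_zero, nsmul_eq_mul, Finset.card_univ, card_units_cast]
  congr 1
  rw [hC0]
  have had : N 0 0 * N 1 1 = N 0 1 * N 1 0 := by
    rwa [Matrix.det_fin_two, sub_eq_zero] at hdet
  have hall : ¬(N 0 0 = 0 ∧ N 0 1 = 0 ∧ N 1 0 = 0 ∧ N 1 1 = 0) := by
    rintro ⟨h1, h2, h3, h4⟩
    apply hN
    ext i j
    fin_cases i <;> fin_cases j <;> simp [h1, h2, h3, h4]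
  have hfa : (∀ i j : Fin 2, N i j ≠ 0) ↔
      (N 0 0 ≠ 0 ∧ N 0 1 ≠ 0 ∧ N 1 0 ≠ 0 ∧ N 1 1 ≠ 0) := by
    constructor
    · intro h; exact ⟨h 0 0, h 0 1, h 1 0, h 1 1⟩
    · rintro ⟨p1, p2, p3, p4⟩ i j
      fin_cases i <;> fin_cases j <;> assumption
  unfold psi2
  by_cases ha : N 0 0 = 0 <;> by_cases hb : N 0 1 = 0 <;>
    by_cases hc : N 1 0 = 0 <;> by_cases hd : N 1 1 = 0
  all_goals try (exfalso; revert had hall; simp [ha, hb, hc, hd, mul_eq_zero]; done)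
  all_goals simp [hfa, ha, hb, hc, hd, qc_zero, qc_mul]
  all_goals try ring
  all_goals try (
    have hrel : qc R (N 0 0) * qc R (N 1 1) = qc R (N 0 1) * qc R (N 1 0) := by
      rw [← qc_mul, ← qc_mul, had]
    rcases qc_dichot ha with h1 | h1 <;> rcases qc_dichot hb with h2 | h2 <;>
      rcases qc_dichot hc with h3 | h3 <;> rcases qc_dichot hd with h4 | h4 <;>
      rw [h1, h2, h3, h4] at hrel ⊢ <;> norm_num at *)

end

end Stmt7Aux

namespace Stmt7Aux

noncomputable section

set_option linter.unusedSectionVars false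
set_option maxHeartbeats 2000000
open scoped Classical

variable {R : Type*} [CommRing R] [IsDomain R] [IsDiscreteValuationRing R]
  [Fintype (ResidueField R)] [DecidableEq (ResidueField R)]
  {K : Type*} [Field K] [Algebra R K] [IsFractionRing R K] {π : R}

lemma extend_map (φR : Matrix (Fin 2) (Fin 2) R → ℂ) (M : Matrix (Fin 2) (Fin 2) R) :
    extendToK R K φR (M.map (algebraMap R K)) = φR M := by
  rw [extendToK]
  have hex : ∃ M₀ : Matrix (Fin 2) (Fin 2) R,
      M₀.map (algebraMap R K) = M.map (algebraMap R K) := ⟨M, rfl⟩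
  rw [dif_pos hex]
  exact congrArg φR (mapK_injective K hex.choose_spec)

lemma extend_ne_zero {φR : Matrix (Fin 2) (Fin 2) R → ℂ} {g : Matrix (Fin 2) (Fin 2) K}
    (h : extendToK R K φR g ≠ 0) :
    ∃ M, M.map (algebraMap R K) = g ∧ φR M ≠ 0 := by
  by_cases hex : ∃ M₀ : Matrix (Fin 2) (Fin 2) R, M₀.map (algebraMap R K) = g
  · refine ⟨hex.choose, hex.choose_spec, ?_⟩
    rw [extendToK, dif_pos hex] at h
    exact h
  · exfalso
    apply h
    rw [extendToK, dif_neg hex]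

lemma pStar_eq_sum (hπ : maximalIdeal R = Ideal.span {π})
    (lft : (ResidueField R)ˣ → Rˣ)
    (hlft : ∀ c : (ResidueField R)ˣ, residue R ((lft c : R)) = (c : ResidueField R))
    (φR : Matrix (Fin 2) (Fin 2) R → ℂ)
    (Φ : ResidueField R → Matrix (Fin 2) (Fin 2) (ResidueField R) → ℂ)
    (hzero : ∀ M, ¬ inMM R M → φR M = 0)
    (hsmul : ∀ (v : Rˣ) M, inMM R M → φR ((v : R) • M) = Φ (residue R (v : R)) (redM R M))
    {g : Matrix (Fin 2) (Fin 2) K} {n : ℤ} {u : Rˣ} {M : Matrix (Fin 2) (Fin 2) R}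
    (hM : inMM R M) (hmap : M.map (algebraMap R K) = sc K π n u • g) :
    pStar R K π lft (extendToK R K φR) g
      = ((Fintype.card (ResidueField R) : ℂ) - 1)⁻¹ *
          ∑ e : (ResidueField R)ˣ, Φ (e : ResidueField R) (redM R M) := by
  rw [pStar]
  congr 1
  have hvan : ∀ m : ℤ, m ≠ n →
      (∑ c : (ResidueField R)ˣ, extendToK R K φR (sc K π m (lft c) • g)) = 0 := by
    intro m hm
    apply Finset.sum_eq_zero
    intro c _
    by_contra hne
    obtain ⟨M', hmap', hφ⟩ := extend_ne_zero hne
    have hM' : inMM R M' := by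
      by_contra h
      exact hφ (hzero M' h)
    obtain ⟨h0, -⟩ := uniq hπ hM hM' (rel hπ hmap hmap')
    omega
  have h1 : (∑' m : ℤ, ∑ c : (ResidueField R)ˣ,
      extendToK R K φR (sc K π m (lft c) • g))
      = ∑ c : (ResidueField R)ˣ, extendToK R K φR (sc K π n (lft c) • g) :=
    tsum_eq_single n hvan
  rw [show (∑' m : ℤ, ∑ c : (ResidueField R)ˣ,
      extendToK R K φR (((algebraMap R K π) ^ m * algebraMap R K ((lft c : R))) • g))
      = ∑ c : (ResidueField R)ˣ, extendToK R K φR (sc K π n (lft c) • g) from h1]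
  have hterm : ∀ c : (ResidueField R)ˣ, extendToK R K φR (sc K π n (lft c) • g)
      = Φ ((c : ResidueField R) * (residue R ((u : R)))⁻¹) (redM R M) := by
    intro c
    have hsc : (((lft c * u⁻¹ : Rˣ) : R) • M).map (algebraMap R K) = sc K π n (lft c) • g := by
      rw [mapK_smul, hmap, smul_smul]
      congr 1
      rw [Units.val_mul, _root_.map_mul (algebraMap R K), map_unit_inv]
      unfold sc
      field_simp
    rw [← hsc, extend_map, hsmul _ _ hM]
    congr 1
    rw [Units.val_mul, _root_.map_mul (residue R), hlft c, res_unit_inv]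
  rw [Finset.sum_congr rfl fun c _ => hterm c]
  -- reindex the sum over units
  have hwu : ∀ c : (ResidueField R)ˣ,
      (c : ResidueField R) * ((residue R ((u : R)))⁻¹)
        = ((c * ((Units.map (residue R).toMonoidHom u)⁻¹) : (ResidueField R)ˣ) :
            ResidueField R) := by
    intro c
    rw [Units.val_mul]
    congr 1
    rw [Units.val_inv_eq_inv_val]
    rfl
  rw [Finset.sum_congr rfl fun c _ => by rw [hwu c]]
  exact Equiv.sum_comp (Equiv.mulRight ((Units.map (residue R).toMonoidHom u)⁻¹))
    (fun e : (ResidueField R)ˣ => Φ (e : ResidueField R) (redM R M))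

lemma pStar_vanish (lft : (ResidueField R)ˣ → Rˣ)
    (φR : Matrix (Fin 2) (Fin 2) R → ℂ)
    (hzero : ∀ M, ¬ inMM R M → φR M = 0)
    {g : Matrix (Fin 2) (Fin 2) K} (hg : ¬ cond R K π g) :
    pStar R K π lft (extendToK R K φR) g = 0 := by
  rw [pStar]
  have hvan : ∀ m : ℤ, (∑ c : (ResidueField R)ˣ,
      extendToK R K φR (sc K π m (lft c) • g)) = 0 := by
    intro m
    apply Finset.sum_eq_zero
    intro c _
    by_contra hne
    obtain ⟨M', hmap', hφ⟩ := extend_ne_zero hne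
    have hM' : inMM R M' := by
      by_contra h
      exact hφ (hzero M' h)
    exact hg ⟨⟨m, lft c, M'⟩, hM', hmap'⟩
  rw [show (∑' m : ℤ, ∑ c : (ResidueField R)ˣ,
      extendToK R K φR (((algebraMap R K π) ^ m * algebraMap R K ((lft c : R))) • g))
      = ∑' m : ℤ, (0 : ℂ) from tsum_congr fun m => hvan m]
  rw [tsum_zero, mul_zero]

end

end Stmt7Aux

/-- There exist functions `φ₁, φ₂ : GL₂(K) → ℂ`, each invariant under scalar
multiplication by `Kˣ`, such that `p_*h̃ − p_*f̃ = φ₁ + φ₂`, where `φ₁` is invariant under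
right translation by the diagonal torus over `R` and `φ₂` is an eigenfunction under left
translation by the diagonal torus over `R` with eigencharacter `diag(a,d) ↦ χ(ā)·χ(d̄)`. -/
theorem stmt_7 (R : Type*) [CommRing R] [IsDomain R] [IsDiscreteValuationRing R]
    [Fintype (ResidueField R)] [DecidableEq (ResidueField R)]
    (hodd : Odd (Fintype.card (ResidueField R)))
    (K : Type*) [Field K] [Algebra R K] [IsFractionRing R K]
    (π : R) (hπ : maximalIdeal R = Ideal.span {π})
    (lft : (ResidueField R)ˣ → Rˣ)
    (hlft : ∀ c : (ResidueField R)ˣ, residue R ((lft c : R)) = (c : ResidueField R)) :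
    ∃ φ₁ φ₂ : Matrix (Fin 2) (Fin 2) K → ℂ,
      (∀ (lam : Kˣ) (g : Matrix (Fin 2) (Fin 2) K), φ₁ ((lam : K) • g) = φ₁ g) ∧
      (∀ (lam : Kˣ) (g : Matrix (Fin 2) (Fin 2) K), φ₂ ((lam : K) • g) = φ₂ g) ∧
      (∀ g : Matrix (Fin 2) (Fin 2) K,
        pStar R K π lft (extendToK R K (htildeR R)) g -
          pStar R K π lft (extendToK R K (ftildeR R)) g = φ₁ g + φ₂ g) ∧
      (∀ (a d : Rˣ) (g : Matrix (Fin 2) (Fin 2) K),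
        φ₁ (g * Matrix.diagonal ![algebraMap R K (a : R), algebraMap R K (d : R)]) = φ₁ g) ∧
      (∀ (a d : Rˣ) (g : Matrix (Fin 2) (Fin 2) K),
        φ₂ (Matrix.diagonal ![algebraMap R K (a : R), algebraMap R K (d : R)] * g) =
          ((quadraticChar (ResidueField R) (residue R (a : R)) : ℤ) : ℂ) *
            ((quadraticChar (ResidueField R) (residue R (d : R)) : ℤ) : ℂ) * φ₂ g) := by
  classical
  refine ⟨Stmt7Aux.phi1 R K π, Stmt7Aux.phi2 R K π, ?_, ?_, ?_, ?_, ?_⟩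
  · exact fun lam g => Stmt7Aux.phi1_scalar hπ lam g
  · exact fun lam g => Stmt7Aux.phi2_scalar hπ lam g
  · intro g
    by_cases hcond : Stmt7Aux.cond R K π g
    · obtain ⟨⟨n, u, M⟩, hM, hmap⟩ := id hcond
      rw [Stmt7Aux.pStar_eq_sum hπ lft hlft (htildeR R) (Stmt7Aux.hresF R)
          (fun M h => Stmt7Aux.htilde_not h)
          (fun v M h => Stmt7Aux.htilde_unit_smul v M h) hM hmap,
        Stmt7Aux.pStar_eq_sum hπ lft hlft (ftildeR R) (Stmt7Aux.fresF R)
          (fun M h => Stmt7Aux.ftilde_not h)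
          (fun v M h => Stmt7Aux.ftilde_unit_smul v M h) hM hmap,
        ← mul_sub, ← Finset.sum_sub_distrib,
        Stmt7Aux.sum_hf hodd (Stmt7Aux.redM_det_zero hM) (Stmt7Aux.redM_ne_zero hM),
        inv_mul_cancel_left₀ Stmt7Aux.card_sub_one_ne_zero]
      rw [Stmt7Aux.phi1, if_pos hcond, Stmt7Aux.phi2_eq hπ hM hmap]
    · rw [Stmt7Aux.pStar_vanish lft (htildeR R) (fun M h => Stmt7Aux.htilde_not h) hcond,
        Stmt7Aux.pStar_vanish lft (ftildeR R) (fun M h => Stmt7Aux.ftilde_not h) hcond,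
        Stmt7Aux.phi1, if_neg hcond, Stmt7Aux.phi2, dif_neg hcond]
      norm_num
  · intro a d g
    exact Stmt7Aux.phi1_diag hπ a d g
  · intro a d g
    exact Stmt7Aux.phi2_diag hπ a d g
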